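/- arXiv:2104.06549 — 2 statements merged into one kernel-verified Lean document; each statement's English description precedes it below -/
import Mathlib

section
/- Let U : ℝⁿ → ℝ be a C² nonnegative function, p ∈ ℝⁿ with U(p) = 0, v ∈ ℝⁿ, and T > 0. For each ε > 0 let x_ε : ℝ → ℝⁿ be the (global) solution of ẍ = −ε⁻²∇U(x) with x_ε(0) = p and ẋ_ε(0) = v. Then there exist a sequence (ε_j) of positive numbers with ε_j → 0 and a continuous curve x : [−T,T] → ℝⁿ with x(0) = p such that x_{ε_j} → x uniformly on [−T,T] and U(x(t)) = 0 for every t ∈ [−T,T]. -/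
set_option maxHeartbeats 1000000
set_option synthInstance.maxHeartbeats 400000


open Set Filter

open BoundedContinuousFunction RealInnerProductSpace NNReal in
/-- **Arzelà–Ascoli extraction of a limit curve confined to the constraint.**
Let `U ≥ 0` be `C²` with `U p = 0`, and for every `ε > 0` let `x ε` be the
global solution of `ẍ = −ε⁻²∇U(x)` with `x ε 0 = p`, `ẋ ε 0 = v`. Then for
every `T > 0` there are positive `ε j → 0` and a continuous curve
`y : [−T,T] → ℝⁿ` with `y 0 = p` such that `x (ε j) → y` uniformly on
`[−T,T]` and `U (y t) = 0` on `[−T,T]`. -/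
theorem limit_curve_on_constraint
    {n : ℕ} (U : EuclideanSpace ℝ (Fin n) → ℝ)
    (hU : ContDiff ℝ 2 U) (hUnonneg : ∀ y, 0 ≤ U y)
    (p v : EuclideanSpace ℝ (Fin n)) (hUp : U p = 0)
    (T : ℝ) (hT : 0 < T)
    (x x' : ℝ → ℝ → EuclideanSpace ℝ (Fin n))
    (hx0 : ∀ ε > (0:ℝ), x ε 0 = p) (hx'0 : ∀ ε > (0:ℝ), x' ε 0 = v)
    (hderiv : ∀ ε > (0:ℝ), ∀ t : ℝ, HasDerivAt (x ε) (x' ε t) t)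
    (hderiv' : ∀ ε > (0:ℝ), ∀ t : ℝ,
      HasDerivAt (x' ε) (-(ε^2)⁻¹ • gradient U (x ε t)) t) :
    ∃ (εseq : ℕ → ℝ) (y : ℝ → EuclideanSpace ℝ (Fin n)),
      (∀ j, 0 < εseq j) ∧
      Tendsto εseq atTop (nhds 0) ∧
      y 0 = p ∧
      ContinuousOn y (Icc (-T) T) ∧
      TendstoUniformlyOn (fun j => x (εseq j)) y atTop (Icc (-T) T) ∧
      (∀ t ∈ Icc (-T) T, U (y t) = 0) := by
  classical
  have hUdiff : Differentiable ℝ U := hU.differentiable (by norm_num)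
  -- Energy conservation ⇒ velocity bound and potential bound
  have key : ∀ ε > (0:ℝ), ∀ t : ℝ,
      ‖x' ε t‖ ≤ ‖v‖ ∧ U (x ε t) ≤ ε^2 * (‖v‖^2 / 2) := by
    intro ε hε t
    have hε2 : (0:ℝ) < ε^2 := by positivity
    -- the energy function
    set g : ℝ → ℝ := fun s => ⟪x' ε s, x' ε s⟫ + (2 * (ε^2)⁻¹) * U (x ε s) with hgdef
    have hg : ∀ s, HasDerivAt g 0 s := by
      intro s
      have h1 := (hderiv' ε hε s).inner ℝ (hderiv' ε hε s)
      have h2 : HasDerivAt (fun r => U (x ε r)) ⟪gradient U (x ε s), x' ε s⟫ s := by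
        have := ((hUdiff (x ε s)).hasGradientAt).hasFDerivAt.comp_hasDerivAt s
          (hderiv ε hε s)
        exact this
      have h3 := h1.add (h2.const_mul (2 * (ε^2)⁻¹))
      convert h3 using 1
      · rfl
      · rfl
      · rfl
      simp only [real_inner_smul_left, real_inner_smul_right,
        real_inner_comm (x' ε s) (gradient U (x ε s))]
      ring
    have hconst := is_const_of_deriv_eq_zero
      (fun s => (hg s).differentiableAt) (fun s => (hg s).deriv)
    have hgt : g t = ‖v‖^2 := by
      have := hconst t 0
      rw [this]
      simp only [hgdef, hx0 ε hε, hx'0 ε hε, hUp, real_inner_self_eq_norm_sq]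
      ring
    have hU1 : 0 ≤ U (x ε t) := hUnonneg _
    have hsq : ‖x' ε t‖^2 + (2 * (ε^2)⁻¹) * U (x ε t) = ‖v‖^2 := by
      rw [← real_inner_self_eq_norm_sq]; exact hgt
    constructor
    · nlinarith [norm_nonneg (x' ε t), norm_nonneg v, sq_nonneg ‖x' ε t‖,
        mul_nonneg (by positivity : (0:ℝ) ≤ 2 * (ε^2)⁻¹) hU1]
    · have h2 : (2 * (ε^2)⁻¹) * U (x ε t) ≤ ‖v‖^2 := by nlinarith [sq_nonneg ‖x' ε t‖]
      have : U (x ε t) ≤ ‖v‖^2 / (2 * (ε^2)⁻¹) := by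
        rw [le_div_iff₀ (by positivity)]; linarith [h2]
      calc U (x ε t) ≤ ‖v‖^2 / (2 * (ε^2)⁻¹) := this
        _ = ε^2 * (‖v‖^2 / 2) := by field_simp
  -- uniform Lipschitz bound
  have hlip : ∀ ε > (0:ℝ), LipschitzWith ‖v‖₊ (x ε) := by
    intro ε hε
    refine lipschitzWith_of_nnnorm_deriv_le
      (fun t => (hderiv ε hε t).differentiableAt) fun t => ?_
    rw [(hderiv ε hε t).deriv]
    exact_mod_cast (key ε hε t).1
  haveI : CompactSpace (Icc (-T) T) := isCompact_iff_compactSpace.mp isCompact_Icc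
  -- the sequence of ε's before extraction
  set ε0 : ℕ → ℝ := fun j => ((j:ℝ)+1)⁻¹ with hε0def
  have hε0pos : ∀ j, 0 < ε0 j := fun j => by positivity
  have hε0tend : Tendsto ε0 atTop (nhds 0) := by
    simpa [hε0def, one_div] using tendsto_one_div_add_atTop_nhds_zero_nat (𝕜 := ℝ)
  -- the bounded continuous functions
  set f : ℕ → (Icc (-T) T) →ᵇ EuclideanSpace ℝ (Fin n) := fun j =>
    mkOfCompact ⟨fun t => x (ε0 j) t, ((hlip _ (hε0pos j)).continuous).comp
      continuous_subtype_val⟩ with hfdef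
  -- values in a fixed compact ball
  have hval : ∀ j (t : Icc (-T) T), f j t ∈ Metric.closedBall p (‖v‖ * T) := by
    intro j t
    have h1 := (hlip _ (hε0pos j)).dist_le_mul (t : ℝ) 0
    rw [hx0 _ (hε0pos j)] at h1
    have habs : |(t:ℝ)| ≤ T := abs_le.mpr ⟨t.2.1, t.2.2⟩
    have : dist (x (ε0 j) t) p ≤ ‖v‖ * T := by
      refine h1.trans ?_
      have : dist (t:ℝ) 0 = |(t:ℝ)| := by simp [Real.dist_eq]
      rw [this]
      exact mul_le_mul_of_nonneg_left habs (norm_nonneg v)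
    simpa [Metric.mem_closedBall, hfdef] using this
  -- Arzelà–Ascoli
  have hcompact : IsCompact (closure (Set.range f)) := by
    refine arzela_ascoli (Metric.closedBall p (‖v‖ * T))
      (isCompact_closedBall p _) (Set.range f) ?_ ?_
    · rintro F t ⟨j, rfl⟩
      exact hval j t
    · refine Metric.equicontinuous_of_continuity_modulus (fun d => ‖v‖ * d) ?_ _ ?_
      · simpa using (tendsto_id (x := nhds (0:ℝ))).const_mul ‖v‖
      · rintro a b ⟨F, j, rfl⟩
        have := (hlip _ (hε0pos j)).dist_le_mul (a : ℝ) (b : ℝ)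
        simpa [hfdef, Subtype.dist_eq] using this
  obtain ⟨g, -, φ, hφ, hgtend⟩ := hcompact.tendsto_subseq
    (fun j => subset_closure (Set.mem_range_self j))
  have hTU : TendstoUniformly (fun j => ⇑(f (φ j))) ⇑g atTop :=
    tendsto_iff_tendstoUniformly.mp hgtend
  -- define the limit curve
  have h0mem : (0:ℝ) ∈ Icc (-T) T := ⟨by linarith, le_of_lt hT⟩
  refine ⟨fun j => ε0 (φ j),
    fun t => if ht : t ∈ Icc (-T) T then g ⟨t, ht⟩ else p,
    fun j => hε0pos _, hε0tend.comp hφ.tendsto_atTop, ?_, ?_, ?_, ?_⟩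
  · -- y 0 = p
    simp only [dif_pos h0mem]
    have h1 : Tendsto (fun j => f (φ j) ⟨0, h0mem⟩) atTop (nhds (g ⟨0, h0mem⟩)) :=
      hTU.tendsto_at ⟨0, h0mem⟩
    have h2 : ∀ j, f (φ j) ⟨0, h0mem⟩ = p := fun j => by
      simp [hfdef, hx0 _ (hε0pos (φ j))]
    rw [funext h2] at h1
    exact tendsto_nhds_unique h1 tendsto_const_nhds
  · -- continuity
    rw [continuousOn_iff_continuous_restrict]
    refine g.continuous.congr (fun t => ?_)
    rw [Set.restrict_apply, dif_pos t.2]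
  · -- uniform convergence
    rw [tendstoUniformlyOn_iff_tendstoUniformly_comp_coe]
    convert hTU using 1
    · rfl
    funext t
    simp [Function.comp, dif_pos t.2]
  · -- U vanishes on the limit curve
    intro t ht
    simp only [dif_pos ht]
    have h1 : Tendsto (fun j => f (φ j) ⟨t, ht⟩) atTop (nhds (g ⟨t, ht⟩)) :=
      hTU.tendsto_at ⟨t, ht⟩
    have h2 : Tendsto (fun j => U (x (ε0 (φ j)) t)) atTop (nhds (U (g ⟨t, ht⟩))) := by
      exact (hU.continuous.tendsto _).comp h1
    have h3 : Tendsto (fun j => U (x (ε0 (φ j)) t)) atTop (nhds 0) := by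
      refine squeeze_zero (fun j => hUnonneg _)
        (fun j => (key _ (hε0pos (φ j)) t).2) ?_
      have : Tendsto (fun j => ε0 (φ j)) atTop (nhds 0) := hε0tend.comp hφ.tendsto_atTop
      have := ((this.pow 2).mul_const (‖v‖^2 / 2))
      simpa using this
    exact tendsto_nhds_unique h2 h3
end

section
/- Let f : ℝⁿ → ℝ be C² and let x₀ ∈ ℝⁿ with ∇f(x₀) ≠ 0. Let T(x) = ∇f(x)/‖∇f(x)‖, defined on the open set where ∇f ≠ 0, and let w = ∇(log ‖∇f‖)(x₀) (which exists since f is C² and ∇f(x₀) ≠ 0). Then the directional derivative of the map T at x₀ in the direction T(x₀) equals w − ⟨w, T(x₀)⟩ T(x₀), i.e. the curvature vector of the gradient flow line of f through x₀ (the equipotential distortion κ at x₀) equals the component of ∇(log ‖∇f‖)(x₀) orthogonal to ∇f(x₀). -/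
open Set Filter
open scoped RealInnerProductSpace

/-- **The equipotential distortion (curvature of gradient flow lines) is the
tangential component of `∇ log ‖∇f‖`.**
Let `f` be `C²` with `∇f(x₀) ≠ 0`, let `T = ∇f/‖∇f‖` be the unit gradient
field near `x₀`, and let `w = ∇(log ‖∇f‖)(x₀)`. Then the directional
derivative of `T` at `x₀` in the direction `T x₀` equals
`w − ⟨w, T x₀⟩ T x₀`. -/
theorem equipotential_distortion_eq_tangential_log_gradient
    {n : ℕ} (f : EuclideanSpace ℝ (Fin n) → ℝ) (hf : ContDiff ℝ 2 f)
    (x₀ : EuclideanSpace ℝ (Fin n)) (hx₀ : gradient f x₀ ≠ 0)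
    (w : EuclideanSpace ℝ (Fin n))
    (hw : HasGradientAt (fun y => Real.log ‖gradient f y‖) w x₀) :
    HasLineDerivAt ℝ (fun y => ‖gradient f y‖⁻¹ • gradient f y)
      (w - ⟪w, ‖gradient f x₀‖⁻¹ • gradient f x₀⟫ • (‖gradient f x₀‖⁻¹ • gradient f x₀))
      x₀ (‖gradient f x₀‖⁻¹ • gradient f x₀) := by
  set g : EuclideanSpace ℝ (Fin n) → EuclideanSpace ℝ (Fin n) := fun y => gradient f y with hgdef
  have hr : ‖g x₀‖ ≠ 0 := norm_ne_zero_iff.2 hx₀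
  -- the gradient field is C¹
  have hf' : ContDiff ℝ 1 (fderiv ℝ f) := hf.fderiv_right (by norm_num)
  have hg1 : ContDiff ℝ 1 g :=
    ((InnerProductSpace.toDual ℝ (EuclideanSpace ℝ (Fin n))).symm.contDiff).comp hf'
  have hG : HasFDerivAt g (fderiv ℝ g x₀) x₀ :=
    (hg1.differentiable one_ne_zero x₀).hasFDerivAt
  set G := fderiv ℝ g x₀ with hGdef
  -- symmetry of G (Hessian)
  have hf'' : HasFDerivAt (fderiv ℝ f) (fderiv ℝ (fderiv ℝ f) x₀) x₀ :=
    (hf'.differentiable one_ne_zero x₀).hasFDerivAt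
  have hkey : ∀ u h : EuclideanSpace ℝ (Fin n), ⟪G u, h⟫ = fderiv ℝ (fderiv ℝ f) x₀ u h := by
    intro u h
    have e1 : HasFDerivAt (fun y => (innerSL ℝ h) (g y)) ((innerSL ℝ h).comp G) x₀ :=
      (innerSL ℝ h).hasFDerivAt.comp x₀ hG
    have e2 : HasFDerivAt (fun y => (ContinuousLinearMap.apply ℝ ℝ h) (fderiv ℝ f y))
        ((ContinuousLinearMap.apply ℝ ℝ h).comp (fderiv ℝ (fderiv ℝ f) x₀)) x₀ :=
      (ContinuousLinearMap.apply ℝ ℝ h).hasFDerivAt.comp x₀ hf''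
    have hfun : (fun y => (innerSL ℝ h) (g y))
        = (fun y => (ContinuousLinearMap.apply ℝ ℝ h) (fderiv ℝ f y)) := by
      funext y
      simp only [innerSL_apply_apply, ContinuousLinearMap.apply_apply, hgdef]
      rw [real_inner_comm]
      exact InnerProductSpace.toDual_symm_apply
    rw [hfun] at e1
    have := e1.unique e2
    have := congrArg (fun (L : EuclideanSpace ℝ (Fin n) →L[ℝ] ℝ) => L u) this
    simp only [ContinuousLinearMap.comp_apply, innerSL_apply_apply,
      ContinuousLinearMap.apply_apply] at this
    rw [real_inner_comm] at this
    exact this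
  have hsymm : ∀ u v : EuclideanSpace ℝ (Fin n), ⟪G u, v⟫ = ⟪G v, u⟫ := by
    intro u v
    rw [hkey u v, hkey v u]
    exact (hf.contDiffAt.isSymmSndFDerivAt minSmoothness_of_isRCLikeNormedField.le) u v
  -- identify w
  set A : EuclideanSpace ℝ (Fin n) →L[ℝ] ℝ := (innerSL ℝ (g x₀)).comp G with hAdef
  have hq : HasFDerivAt (fun y => ‖g y‖ ^ 2) (2 • A) x₀ := hG.norm_sq
  have hlog : HasFDerivAt (fun y => Real.log ‖g y‖)
      ((1/2 : ℝ) • ((‖g x₀‖ ^ 2)⁻¹ • (2 • A))) x₀ := by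
    have h2 : HasFDerivAt (fun y => Real.log (‖g y‖ ^ 2))
        ((‖g x₀‖ ^ 2)⁻¹ • (2 • A)) x₀ := hq.log (pow_ne_zero 2 hr)
    have := h2.const_mul ( 1/2 : ℝ)
    have hfun : (fun y => (1/2 : ℝ) * Real.log (‖g y‖ ^ 2))
        = (fun y => Real.log ‖g y‖) := by
      funext y
      rw [Real.log_pow]
      push_cast
      ring
    rw [hfun] at this
    exact this
  have hwval : ∀ u : EuclideanSpace ℝ (Fin n), ⟪w, u⟫ = (‖g x₀‖ ^ 2)⁻¹ * ⟪g x₀, G u⟫ := by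
    intro u
    have h1 := (hasGradientAt_iff_hasFDerivAt.1 hw).unique hlog
    have := congrArg (fun (L : EuclideanSpace ℝ (Fin n) →L[ℝ] ℝ) => L u) h1
    simp only [InnerProductSpace.toDual_apply_apply, ContinuousLinearMap.smul_apply,
      ContinuousLinearMap.comp_apply, innerSL_apply_apply, smul_eq_mul, hAdef,
      two_smul, ContinuousLinearMap.add_apply] at this
    rw [this]; ring
  have hw_eq : w = (‖g x₀‖ ^ 2)⁻¹ • G (g x₀) := by
    apply ext_inner_right ℝ
    intro u
    rw [hwval u, real_inner_smul_left]
    congr 1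
    rw [hsymm (g x₀) u, real_inner_comm]
  -- derivative of the norm
  have hnorm : HasFDerivAt (fun y => ‖g y‖) ((1 / (2 * ‖g x₀‖)) • (2 • A)) x₀ := by
    have := hq.sqrt (pow_ne_zero 2 hr)
    have hfun : (fun y => Real.sqrt (‖g y‖ ^ 2)) = fun y => ‖g y‖ := by
      funext y; exact Real.sqrt_sq (norm_nonneg _)
    rw [hfun, Real.sqrt_sq (norm_nonneg _)] at this
    exact this
  have hinv : HasFDerivAt (fun y => ‖g y‖⁻¹)
      ((-(‖g x₀‖ ^ 2)⁻¹) • ((1 / (2 * ‖g x₀‖)) • (2 • A))) x₀ :=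
    (hasDerivAt_inv hr).comp_hasFDerivAt x₀ hnorm
  have hT := hinv.smul hG
  have hL := hT.hasLineDerivAt (‖g x₀‖⁻¹ • g x₀)
  have hval : (‖g x₀‖⁻¹ • G + ((-(‖g x₀‖ ^ 2)⁻¹) • ((1 / (2 * ‖g x₀‖)) • (2 • A))).smulRight (g x₀))
        (‖g x₀‖⁻¹ • g x₀)
      = w - ⟪w, ‖g x₀‖⁻¹ • g x₀⟫ • (‖g x₀‖⁻¹ • g x₀) := by
    rw [hw_eq]
    simp only [ContinuousLinearMap.add_apply, ContinuousLinearMap.smul_apply,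
      ContinuousLinearMap.smulRight_apply, ContinuousLinearMap.comp_apply, innerSL_apply_apply,
      map_smul, real_inner_smul_left, real_inner_smul_right, smul_eq_mul, hAdef]
    rw [real_inner_comm (G (g x₀)) (g x₀)]
    match_scalars
    · field_simp
    · field_simp
      ring
  rw [hval] at hL
  exact hL
end
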